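/- Let $1 < p < \infty$. If $\sigma$ and $\omega$ are reverse doubling measures on $\mathbb{R}^n$ (i.e. there exist constants $c_\sigma, c_\omega < 1$ with $|Q|_\sigma \leq c_\sigma |2Q|_\sigma$ and $|Q|_\omega \leq c_\omega |2Q|_\omega$ for all cubes $Q$), then $\mathcal{A}_p(\sigma, \omega) \lesssim A_p(\sigma, \omega)$, with implicit constant depending on $p$, $n$, $c_\sigma$, $c_\omega$. -/

import Mathlib

open MeasureTheory Set ENNReal

/-- The axis-parallel half-open cube with corner `a` and sidelength `l`. -/
def cubeSet {n : ℕ} (a : Fin n → ℝ) (l : ℝ) : Set (Fin n → ℝ) :=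
  {x | ∀ i, x i ∈ Set.Ico (a i) (a i + l)}

/-- The concentric dilate `rQ` of the cube `Q` with corner `a` and sidelength `l`. -/
def dilateCube {n : ℕ} (a : Fin n → ℝ) (l r : ℝ) : Set (Fin n → ℝ) :=
  cubeSet (fun i => a i - (r - 1) * l / 2) (r * l)

/-- A measure is reverse doubling with constant `c < 1`: `|Q|_μ ≤ c |2Q|_μ` for all cubes. -/
def ReverseDoubling {n : ℕ} (μ : Measure (Fin n → ℝ)) (c : ℝ) : Prop :=
  ∀ (a : Fin n → ℝ) (l : ℝ), 0 < l →
    μ (cubeSet a l) ≤ ENNReal.ofReal c * μ (dilateCube a l 2)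

/-- The scalar two-weight Muckenhoupt characteristic `A_p(σ,ω)`. -/
noncomputable def scalarAp (n : ℕ) (p p' : ℝ) (σ ω : Measure (Fin n → ℝ)) : ℝ≥0∞ :=
  ⨆ (a : Fin n → ℝ) (l : ℝ) (_ : 0 < l),
    (σ (cubeSet a l) / ENNReal.ofReal (l ^ n)) ^ (1 / p') *
    (ω (cubeSet a l) / ENNReal.ofReal (l ^ n)) ^ (1 / p)

/-- The two-tailed Muckenhoupt characteristic `𝒜_p(σ,ω)`. -/
noncomputable def tailedAp (n : ℕ) (p p' : ℝ) (σ ω : Measure (Fin n → ℝ)) : ℝ≥0∞ :=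
  ⨆ (a : Fin n → ℝ) (l : ℝ) (_ : 0 < l),
    ((ENNReal.ofReal (l ^ n))⁻¹ *
      ∫⁻ x, ENNReal.ofReal ((l ^ n / (l + Metric.infDist x (cubeSet a l)) ^ n) ^ p) ∂ω) ^ (1 / p) *
    ((ENNReal.ofReal (l ^ n))⁻¹ *
      ∫⁻ x, ENNReal.ofReal ((l ^ n / (l + Metric.infDist x (cubeSet a l)) ^ n) ^ p') ∂σ) ^ (1 / p')

/-! ### Auxiliary lemmas -/

lemma st6_tsum_rpow_le (f : ℕ → ℝ≥0∞) {r : ℝ} (h0 : 0 < r) (h1 : r ≤ 1) :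
    (∑' k, f k) ^ r ≤ ∑' k, (f k) ^ r := by
  have hfin : ∀ N : ℕ, (∑ k ∈ Finset.range N, f k) ^ r ≤ ∑' k, (f k) ^ r := by
    intro N
    have : (∑ k ∈ Finset.range N, f k) ^ r ≤ ∑ k ∈ Finset.range N, (f k) ^ r := by
      induction N with
      | zero => simp [ENNReal.zero_rpow_of_pos h0]
      | succ N ih =>
        rw [Finset.sum_range_succ, Finset.sum_range_succ]
        exact (ENNReal.rpow_add_le_add_rpow _ _ h0.le h1).trans (by gcongr)
    exact this.trans (ENNReal.sum_le_tsum _)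
  have htend : Filter.Tendsto (fun N => (∑ k ∈ Finset.range N, f k) ^ r)
      Filter.atTop (nhds ((∑' k, f k) ^ r)) :=
    (ENNReal.continuous_rpow_const.tendsto _).comp (ENNReal.tendsto_nat_tsum f)
  exact le_of_tendsto htend (Filter.Eventually.of_forall hfin)

lemma st6_cube_measurable {n : ℕ} (a : Fin n → ℝ) (l : ℝ) : MeasurableSet (cubeSet a l) := by
  have : cubeSet a l = ⋂ i, (fun x : Fin n → ℝ => x i) ⁻¹' Set.Ico (a i) (a i + l) := by
    ext x; simp [cubeSet]
  rw [this]
  exact MeasurableSet.iInter fun i => (measurable_pi_apply i) measurableSet_Ico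

lemma st6_cube_congr {n : ℕ} (a b : Fin n → ℝ) (s t : ℝ) (h : ∀ i, a i = b i)
    (hst : s = t) : cubeSet a s = cubeSet b t := by
  subst hst
  have : a = b := funext h
  rw [this]

lemma st6_dilate_eq {n : ℕ} (a : Fin n → ℝ) (l : ℝ) (k : ℕ) :
    dilateCube a l ((2:ℝ)^k) =
      cubeSet (fun i => a i - ((2:ℝ)^k - 1) * l / 2) ((2:ℝ)^k * l) := rfl

lemma st6_rd_iterate {n : ℕ} {μ : Measure (Fin n → ℝ)} {c : ℝ} (hc : 0 ≤ c)
    (hrd : ReverseDoubling μ c) (a : Fin n → ℝ) {l : ℝ} (hl : 0 < l) (k m : ℕ) :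
    μ (dilateCube a l ((2:ℝ)^k)) ≤
      ENNReal.ofReal c ^ m * μ (dilateCube a l ((2:ℝ)^(k+m))) := by
  induction m with
  | zero => simp
  | succ m ih =>
    refine ih.trans ?_
    rw [pow_succ, mul_assoc]
    gcongr
    have h := hrd (fun i => a i - ((2:ℝ)^(k+m) - 1) * l / 2) ((2:ℝ)^(k+m) * l)
      (by positivity)
    have e2 : dilateCube (fun i => a i - ((2:ℝ)^(k+m) - 1) * l / 2) ((2:ℝ)^(k+m) * l) 2
        = dilateCube a l ((2:ℝ)^(k+m+1)) := by
      exact st6_cube_congr _ _ _ _ (fun i => by ring) (by ring)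
    rw [e2] at h
    exact h

lemma st6_infDist_ge {n : ℕ} (a : Fin n → ℝ) {l r : ℝ} (hl : 0 < l) (hr : 1 ≤ r)
    {x : Fin n → ℝ} (hx : x ∉ dilateCube a l r) :
    (r - 1) * l / 2 ≤ Metric.infDist x (cubeSet a l) := by
  have hne : (cubeSet a l).Nonempty := ⟨a, fun i => ⟨le_refl _, by linarith⟩⟩
  by_contra hcon
  push_neg at hcon
  rw [Metric.infDist_lt_iff hne] at hcon
  obtain ⟨y, hy, hxy⟩ := hcon
  simp only [dilateCube, cubeSet, Set.mem_setOf_eq, Set.mem_Ico, not_forall] at hx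
  obtain ⟨i, hi⟩ := hx
  have hyi := hy i
  simp only [Set.mem_Ico] at hyi
  have hdi : dist (x i) (y i) ≤ dist x y := dist_le_pi_dist x y i
  rw [Real.dist_eq] at hdi
  have habs : (r - 1) * l / 2 ≤ |x i - y i| := by
    rw [not_and_or] at hi
    rcases hi with hi | hi
    · push_neg at hi
      have : (r - 1) * l / 2 ≤ y i - x i := by linarith [hyi.1]
      calc (r - 1) * l / 2 ≤ y i - x i := this
        _ ≤ |y i - x i| := le_abs_self _
        _ = |x i - y i| := abs_sub_comm _ _
    · push_neg at hi
      have : (r - 1) * l / 2 ≤ x i - y i := by linarith [hyi.2]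
      exact this.trans (le_abs_self _)
  linarith

lemma st6_exists_mem {n : ℕ} (a : Fin n → ℝ) {l : ℝ} (hl : 0 < l) (x : Fin n → ℝ) :
    ∃ k : ℕ, x ∈ dilateCube a l ((2:ℝ)^(k+1)) := by
  obtain ⟨k, hk⟩ := pow_unbounded_of_one_lt (dist x a * 2 / l) (by norm_num : (1:ℝ) < 2)
  refine ⟨k, fun i => ?_⟩
  have h1 : |x i - a i| ≤ dist x a := by
    rw [← Real.dist_eq]; exact dist_le_pi_dist x a i
  have h2 : dist x a < 2^k * l / 2 := by
    rw [div_lt_iff₀ hl] at hk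
    linarith
  have h3 : (1:ℝ) ≤ 2^k := one_le_pow₀ (by norm_num)
  have h4 : (2:ℝ)^(k+1) = 2 * 2^k := by ring
  have habs := abs_sub_le_iff.mp h1
  simp only [Set.mem_Ico]
  constructor
  · nlinarith [habs.2]
  · nlinarith [habs.1]

lemma st6_scalarAp_ge {n : ℕ} (p p' : ℝ) (σ ω : Measure (Fin n → ℝ))
    (a : Fin n → ℝ) {l : ℝ} (hl : 0 < l) :
    (σ (cubeSet a l) / ENNReal.ofReal (l ^ n)) ^ (1 / p') *
    (ω (cubeSet a l) / ENNReal.ofReal (l ^ n)) ^ (1 / p) ≤ scalarAp n p p' σ ω :=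
  le_iSup_of_le a (le_iSup_of_le l (le_iSup_of_le hl le_rfl))

noncomputable def st6g (n k : ℕ) : ℝ := (2:ℝ)^n * ((2:ℝ)⁻¹)^(k*n)

lemma st6g_pos (n k : ℕ) : 0 < st6g n k := by unfold st6g; positivity

/-- Pointwise bound of the tail kernel by a sum of indicators of dilated cubes. -/
lemma st6_kernel_bound {n : ℕ} (a : Fin n → ℝ) {l : ℝ} (hl : 0 < l) {q : ℝ} (hq : 0 ≤ q)
    (x : Fin n → ℝ) :
    ENNReal.ofReal ((l ^ n / (l + Metric.infDist x (cubeSet a l)) ^ n) ^ q)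
      ≤ ∑' k : ℕ, (dilateCube a l ((2:ℝ)^(k+1))).indicator
          (fun _ => ENNReal.ofReal ((st6g n k) ^ q)) x := by
  classical
  have hex := st6_exists_mem a hl x
  set k0 := Nat.find hex with hk0def
  clear_value k0
  have hk0 : x ∈ dilateCube a l ((2:ℝ)^(k0+1)) := hk0def ▸ Nat.find_spec hex
  have hterm : (dilateCube a l ((2:ℝ)^(k0+1))).indicator
      (fun _ => ENNReal.ofReal ((st6g n k0) ^ q)) x = ENNReal.ofReal ((st6g n k0) ^ q) :=
    Set.indicator_of_mem hk0 _
  refine le_trans ?_ (le_trans (le_of_eq hterm.symm) (ENNReal.le_tsum k0))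
  have hd : 0 ≤ Metric.infDist x (cubeSet a l) := Metric.infDist_nonneg
  set d := Metric.infDist x (cubeSet a l)
  have hden : (0:ℝ) < (l + d) ^ n := by positivity
  apply ENNReal.ofReal_le_ofReal
  apply Real.rpow_le_rpow (by positivity) ?_ hq
  -- base ≤ st6g n k0
  rcases Nat.eq_zero_or_pos k0 with h0 | hpos
  · -- kernel ≤ 1 ≤ st6g n 0
    have hb : l ^ n / (l + d) ^ n ≤ 1 := by
      rw [div_le_one hden]
      exact pow_le_pow_left₀ hl.le (by linarith) n
    refine hb.trans ?_
    rw [h0]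
    unfold st6g
    simp only [Nat.zero_mul, pow_zero, mul_one]
    exact one_le_pow₀ (by norm_num)
  · obtain ⟨m, rfl⟩ : ∃ m, k0 = m + 1 := ⟨k0 - 1, (Nat.succ_pred_eq_of_pos hpos).symm⟩
    have hxnot : x ∉ dilateCube a l ((2:ℝ)^(m+1)) :=
      Nat.find_min hex (show m < Nat.find hex from by omega)
    have hge : ((2:ℝ)^(m+1) - 1) * l / 2 ≤ d :=
      st6_infDist_ge a hl (one_le_pow₀ (by norm_num)) hxnot
    have hld : (2:ℝ)^m * l ≤ l + d := by
      have h4 : (2:ℝ)^(m+1) = 2 * 2^m := by ring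
      nlinarith [one_le_pow₀ (show (1:ℝ) ≤ 2 by norm_num) (n := m)]
    have hpow : ((2:ℝ)^m * l) ^ n ≤ (l + d) ^ n :=
      pow_le_pow_left₀ (by positivity) hld n
    have : l ^ n / (l + d) ^ n ≤ l ^ n / ((2:ℝ)^m * l) ^ n :=
      div_le_div_of_nonneg_left (by positivity) (by positivity) hpow
    refine this.trans (le_of_eq ?_)
    unfold st6g
    rw [mul_pow, ← pow_mul]
    have hln : (0:ℝ) < l ^ n := by positivity
    field_simp
    ring
    simp only [one_div, inv_pow]
    field_simp

lemma st6_dilate_measurable {n : ℕ} (a : Fin n → ℝ) (l r : ℝ) :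
    MeasurableSet (dilateCube a l r) := st6_cube_measurable _ _

lemma st6_integral_bound {n : ℕ} (a : Fin n → ℝ) {l : ℝ} (hl : 0 < l) {q : ℝ} (hq : 0 ≤ q)
    (μ : Measure (Fin n → ℝ)) :
    ∫⁻ x, ENNReal.ofReal ((l ^ n / (l + Metric.infDist x (cubeSet a l)) ^ n) ^ q) ∂μ
      ≤ ∑' k : ℕ, ENNReal.ofReal ((st6g n k) ^ q) * μ (dilateCube a l ((2:ℝ)^(k+1))) := by
  calc ∫⁻ x, ENNReal.ofReal ((l ^ n / (l + Metric.infDist x (cubeSet a l)) ^ n) ^ q) ∂μ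
      ≤ ∫⁻ x, ∑' k : ℕ, (dilateCube a l ((2:ℝ)^(k+1))).indicator
        (fun _ => ENNReal.ofReal ((st6g n k) ^ q)) x ∂μ :=
      lintegral_mono (st6_kernel_bound a hl hq)
    _ = ∑' k : ℕ, ∫⁻ x, (dilateCube a l ((2:ℝ)^(k+1))).indicator
        (fun _ => ENNReal.ofReal ((st6g n k) ^ q)) x ∂μ :=
      lintegral_tsum fun k => (measurable_const.indicator (st6_cube_measurable _ _)).aemeasurable
    _ = ∑' k : ℕ, ENNReal.ofReal ((st6g n k) ^ q) * μ (dilateCube a l ((2:ℝ)^(k+1))) := by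
      refine tsum_congr fun k => ?_
      rw [lintegral_indicator (st6_dilate_measurable _ _ _), setLIntegral_const]

lemma st6_term_eq {g : ℝ} (hg : 0 < g) {q : ℝ} (hq : 0 < q) (Wv L : ℝ≥0∞) :
    (ENNReal.ofReal (g ^ q) * Wv * L⁻¹) ^ (1/q) = ENNReal.ofReal g * ((Wv * L⁻¹) ^ (1/q)) := by
  rw [mul_assoc, ENNReal.mul_rpow_of_nonneg _ _ (by positivity),
    ENNReal.ofReal_rpow_of_pos (Real.rpow_pos_of_pos hg q), ← Real.rpow_mul hg.le,
    mul_one_div_cancel hq.ne', Real.rpow_one]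

lemma st6_factor_bound {n : ℕ} (a : Fin n → ℝ) {l : ℝ} (hl : 0 < l) {q : ℝ} (hq : 1 ≤ q)
    (μ : Measure (Fin n → ℝ)) :
    ((ENNReal.ofReal (l^n))⁻¹ *
      ∫⁻ x, ENNReal.ofReal ((l ^ n / (l + Metric.infDist x (cubeSet a l)) ^ n) ^ q) ∂μ) ^ (1/q)
    ≤ ∑' k : ℕ, ENNReal.ofReal (st6g n k) *
        ((μ (dilateCube a l ((2:ℝ)^(k+1))) * (ENNReal.ofReal (l^n))⁻¹) ^ (1/q)) := by
  have hq0 : (0:ℝ) < q := lt_of_lt_of_le one_pos hq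
  calc
    _ ≤ ((ENNReal.ofReal (l^n))⁻¹ *
        ∑' k : ℕ, ENNReal.ofReal ((st6g n k) ^ q) * μ (dilateCube a l ((2:ℝ)^(k+1)))) ^ (1/q) := by
      gcongr
      exact st6_integral_bound a hl hq0.le μ
    _ = (∑' k : ℕ, ENNReal.ofReal ((st6g n k) ^ q) * μ (dilateCube a l ((2:ℝ)^(k+1)))
          * (ENNReal.ofReal (l^n))⁻¹) ^ (1/q) := by
      rw [ENNReal.tsum_mul_right, mul_comm]
    _ ≤ ∑' k : ℕ, (ENNReal.ofReal ((st6g n k) ^ q) * μ (dilateCube a l ((2:ℝ)^(k+1)))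
          * (ENNReal.ofReal (l^n))⁻¹) ^ (1/q) :=
      st6_tsum_rpow_le _ (by positivity) ((div_le_one hq0).mpr hq)
    _ = _ := tsum_congr fun k => st6_term_eq (st6g_pos n k) hq0 _ _

lemma st6_scalarAp_comm (n : ℕ) (p p' : ℝ) (σ ω : Measure (Fin n → ℝ)) :
    scalarAp n p p' σ ω = scalarAp n p' p ω σ :=
  iSup_congr fun _ => iSup_congr fun _ => iSup_congr fun _ => mul_comm _ _

lemma st6_pair {n : ℕ} (hn : 1 ≤ n) {p p' : ℝ} (hp0 : 0 < 1/p) (hp'0 : 0 < 1/p')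
    (hpp' : 1/p + 1/p' = 1) {cω : ℝ} (hcω : 0 < cω)
    {σ ω : Measure (Fin n → ℝ)} (hω : ReverseDoubling ω cω)
    (a : Fin n → ℝ) {l : ℝ} (hl : 0 < l) {t : ℝ} (htω : cω ^ (1/p) ≤ t)
    (ht2 : (2:ℝ)⁻¹ ≤ t^2) (ht0 : 0 ≤ t) {k j : ℕ} (hkj : k ≤ j) :
    (ENNReal.ofReal (st6g n k) *
      ((ω (dilateCube a l ((2:ℝ)^(k+1))) * (ENNReal.ofReal (l^n))⁻¹) ^ (1/p))) *
    (ENNReal.ofReal (st6g n j) *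
      ((σ (dilateCube a l ((2:ℝ)^(j+1))) * (ENNReal.ofReal (l^n))⁻¹) ^ (1/p')))
      ≤ ENNReal.ofReal ((8:ℝ)^n) * (ENNReal.ofReal t)^(k+j) * scalarAp n p p' σ ω := by
  set L : ℝ≥0∞ := ENNReal.ofReal (l^n) with hLdef
  set W : ℝ≥0∞ := ω (dilateCube a l ((2:ℝ)^(k+1))) with hWdef
  set W' : ℝ≥0∞ := ω (dilateCube a l ((2:ℝ)^(j+1))) with hW'def
  set S' : ℝ≥0∞ := σ (dilateCube a l ((2:ℝ)^(j+1))) with hS'def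
  set ρ : ℝ := cω ^ (1/p) with hρdef
  have hρ0 : 0 < ρ := Real.rpow_pos_of_pos hcω _
  -- reverse doubling growth
  have hWgrow : W ≤ ENNReal.ofReal cω ^ (j-k) * W' := by
    have h := st6_rd_iterate hcω.le hω a hl (k+1) (j-k)
    rwa [show k+1+(j-k) = j+1 from by omega] at h
  -- first factor estimate
  have h1 : (W * L⁻¹) ^ (1/p) ≤ ENNReal.ofReal (ρ^(j-k)) * ((W' * L⁻¹) ^ (1/p)) := by
    have e1 : (ENNReal.ofReal cω ^ (j-k)) ^ (1/p) = ENNReal.ofReal (ρ^(j-k)) := by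
      rw [← ENNReal.ofReal_pow hcω.le, ENNReal.ofReal_rpow_of_pos (pow_pos hcω _)]
      congr 1
      rw [← Real.rpow_natCast cω (j-k), ← Real.rpow_mul hcω.le, mul_comm,
        Real.rpow_mul hcω.le, Real.rpow_natCast, hρdef]
    calc (W * L⁻¹) ^ (1/p)
        ≤ ((ENNReal.ofReal cω ^ (j-k)) * (W' * L⁻¹)) ^ (1/p) := by
          rw [← mul_assoc]; gcongr
      _ = ENNReal.ofReal (ρ^(j-k)) * ((W' * L⁻¹) ^ (1/p)) := by
          rw [ENNReal.mul_rpow_of_nonneg _ _ hp0.le, e1]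
  -- local Ap estimate at scale j+1
  set e : ℝ≥0∞ := ENNReal.ofReal (((2:ℝ)^(j+1))^n) with hedef
  have he0 : e ≠ 0 := (ENNReal.ofReal_pos.mpr (by positivity)).ne'
  have hetop : e ≠ ∞ := ENNReal.ofReal_ne_top
  have hL0 : L ≠ 0 := (ENNReal.ofReal_pos.mpr (by positivity)).ne'
  set L' : ℝ≥0∞ := ENNReal.ofReal (((2:ℝ)^(j+1) * l)^n) with hL'def
  have hLL' : L' = e * L := by
    rw [hL'def, hedef, hLdef, mul_pow, ENNReal.ofReal_mul (by positivity)]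
  have hLinv : L⁻¹ = e * L'⁻¹ := by
    rw [hLL', ENNReal.mul_inv (Or.inl he0) (Or.inl hetop), ← mul_assoc,
      ENNReal.mul_inv_cancel he0 hetop, one_mul]
  have h2 : (W' * L⁻¹) ^ (1/p) * (S' * L⁻¹) ^ (1/p')
      ≤ e * scalarAp n p p' σ ω := by
    have hAp : (S' * L'⁻¹) ^ (1/p') * (W' * L'⁻¹) ^ (1/p) ≤ scalarAp n p p' σ ω := by
      have := st6_scalarAp_ge p p' σ ω
        (fun i => a i - ((2:ℝ)^(j+1) - 1) * l / 2) (show (0:ℝ) < (2:ℝ)^(j+1) * l by positivity)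
      rw [div_eq_mul_inv (σ _), div_eq_mul_inv (ω _)] at this
      exact this
    calc (W' * L⁻¹) ^ (1/p) * (S' * L⁻¹) ^ (1/p')
        = (e * (W' * L'⁻¹)) ^ (1/p) * (e * (S' * L'⁻¹)) ^ (1/p') := by
          rw [hLinv]; ring_nf
      _ = (e ^ (1/p) * e ^ (1/p')) * ((W' * L'⁻¹) ^ (1/p) * (S' * L'⁻¹) ^ (1/p')) := by
          rw [ENNReal.mul_rpow_of_nonneg _ _ hp0.le, ENNReal.mul_rpow_of_nonneg _ _ hp'0.le]
          ring
      _ = e * ((W' * L'⁻¹) ^ (1/p) * (S' * L'⁻¹) ^ (1/p')) := by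
          rw [← ENNReal.rpow_add _ _ he0 hetop, hpp', ENNReal.rpow_one]
      _ ≤ e * scalarAp n p p' σ ω := by
          rw [mul_comm ((W' * L'⁻¹) ^ (1/p)) _]; gcongr
  -- real coefficient inequality
  have hreal : st6g n k * (ρ^(j-k) * (st6g n j * ((2:ℝ)^(j+1))^n))
      ≤ (8:ℝ)^n * t^(k+j) := by
    have key : st6g n k * st6g n j * ((2:ℝ)^(j+1))^n = (8:ℝ)^n * ((2:ℝ)⁻¹)^(k*n) := by
      unfold st6g
      rw [inv_pow, inv_pow, ← pow_mul, show (j+1)*n = j*n + n from by ring, pow_add,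
        show (8:ℝ)^n = 2^n * 2^n * 2^n from by rw [← mul_pow, ← mul_pow]; norm_num]
      have h2jn : ((2:ℝ)^(j*n)) ≠ 0 := by positivity
      have h2kn : ((2:ℝ)^(k*n)) ≠ 0 := by positivity
      field_simp
    have hmono : ((2:ℝ)⁻¹)^(k*n) * ρ^(j-k) ≤ t^(k+j) := by
      have b1 : ((2:ℝ)⁻¹)^(k*n) ≤ ((2:ℝ)⁻¹)^k :=
        pow_le_pow_of_le_one (by norm_num) (by norm_num) (Nat.le_mul_of_pos_right k hn)
      have b2 : ((2:ℝ)⁻¹)^k ≤ (t^2)^k := pow_le_pow_left₀ (by norm_num) ht2 k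
      have b3 : ρ^(j-k) ≤ t^(j-k) := pow_le_pow_left₀ hρ0.le htω _
      calc ((2:ℝ)⁻¹)^(k*n) * ρ^(j-k) ≤ (t^2)^k * t^(j-k) := by
            apply mul_le_mul (b1.trans b2) b3 (by positivity) (by positivity)
        _ = t^(k+j) := by rw [← pow_mul, ← pow_add]; congr 1; omega
    calc st6g n k * (ρ^(j-k) * (st6g n j * ((2:ℝ)^(j+1))^n))
        = (st6g n k * st6g n j * ((2:ℝ)^(j+1))^n) * ρ^(j-k) := by ring
      _ = (8:ℝ)^n * (((2:ℝ)⁻¹)^(k*n) * ρ^(j-k)) := by rw [key]; ring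
      _ ≤ (8:ℝ)^n * t^(k+j) := by
          have h8 : (0:ℝ) ≤ (8:ℝ)^n := by positivity
          exact mul_le_mul_of_nonneg_left hmono h8
  -- assemble in ℝ≥0∞
  calc (ENNReal.ofReal (st6g n k) * ((W * L⁻¹) ^ (1/p))) *
      (ENNReal.ofReal (st6g n j) * ((S' * L⁻¹) ^ (1/p')))
      ≤ (ENNReal.ofReal (st6g n k) * (ENNReal.ofReal (ρ^(j-k)) * ((W' * L⁻¹) ^ (1/p)))) *
        (ENNReal.ofReal (st6g n j) * ((S' * L⁻¹) ^ (1/p'))) := by gcongr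
    _ = (ENNReal.ofReal (st6g n k) * ENNReal.ofReal (ρ^(j-k)) * ENNReal.ofReal (st6g n j)) *
        ((W' * L⁻¹) ^ (1/p) * (S' * L⁻¹) ^ (1/p')) := by ring
    _ ≤ (ENNReal.ofReal (st6g n k) * ENNReal.ofReal (ρ^(j-k)) * ENNReal.ofReal (st6g n j)) *
        (e * scalarAp n p p' σ ω) := by gcongr
    _ = (ENNReal.ofReal (st6g n k) * ENNReal.ofReal (ρ^(j-k)) * ENNReal.ofReal (st6g n j) * e) *
        scalarAp n p p' σ ω := by ring
    _ ≤ ENNReal.ofReal ((8:ℝ)^n) * (ENNReal.ofReal t)^(k+j) * scalarAp n p p' σ ω := by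
        gcongr ?_ * _
        have hg1 : (0:ℝ) ≤ st6g n k := (st6g_pos n k).le
        have hg2 : (0:ℝ) ≤ ρ^(j-k) := pow_nonneg hρ0.le _
        have hg3 : (0:ℝ) ≤ st6g n j := (st6g_pos n j).le
        have h8 : (0:ℝ) ≤ (8:ℝ)^n := by positivity
        rw [hedef, ← ENNReal.ofReal_mul hg1, ← ENNReal.ofReal_mul (mul_nonneg hg1 hg2),
          ← ENNReal.ofReal_mul (mul_nonneg (mul_nonneg hg1 hg2) hg3),
          ← ENNReal.ofReal_pow ht0, ← ENNReal.ofReal_mul h8]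
        apply ENNReal.ofReal_le_ofReal
        calc st6g n k * ρ^(j-k) * st6g n j * ((2:ℝ)^(j+1))^n
            = st6g n k * (ρ^(j-k) * (st6g n j * ((2:ℝ)^(j+1))^n)) := by ring
          _ ≤ (8:ℝ)^n * t^(k+j) := hreal

/-- For reverse doubling measures `σ, ω`, the two-tailed Muckenhoupt characteristic is
controlled by the scalar one: `𝒜_p(σ,ω) ≲ A_p(σ,ω)`, with constant depending only on
`p`, `n` and the reverse doubling constants. -/
theorem stmt6 (n : ℕ) (hn : 1 ≤ n) (p p' : ℝ) (hp : 1 < p) (hpp' : 1 / p + 1 / p' = 1)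
    (cσ cω : ℝ) (hcσ : 0 < cσ) (hcσ1 : cσ < 1) (hcω : 0 < cω) (hcω1 : cω < 1) :
    ∃ C : ℝ≥0∞, 0 < C ∧ C < ∞ ∧
      ∀ (σ ω : Measure (Fin n → ℝ)) [IsLocallyFiniteMeasure σ] [IsLocallyFiniteMeasure ω],
        ReverseDoubling σ cσ → ReverseDoubling ω cω →
        tailedAp n p p' σ ω ≤ C * scalarAp n p p' σ ω := by
  have hp0 : (0:ℝ) < p := lt_trans one_pos hp
  have hip_pos : 0 < 1/p := by positivity
  have hip_lt1 : 1/p < 1 := by rw [div_lt_one hp0]; exact hp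
  have hip' : 1/p' = 1 - 1/p := by linarith
  have hip'_pos : 0 < 1/p' := by rw [hip']; linarith
  have hp'0 : (0:ℝ) < p' := one_div_pos.mp hip'_pos
  have hp'1 : 1 ≤ p' := by
    have h1 : 1/p' < 1 := by rw [hip']; linarith
    rw [div_lt_one hp'0] at h1
    exact h1.le
  set ρω : ℝ := cω ^ (1/p) with hρω
  set ρσ : ℝ := cσ ^ (1/p') with hρσ
  set s : ℝ := Real.sqrt 2⁻¹ with hs
  set t : ℝ := max (max ρω ρσ) s with ht
  have hρω0 : 0 < ρω := Real.rpow_pos_of_pos hcω _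
  have hρσ0 : 0 < ρσ := Real.rpow_pos_of_pos hcσ _
  have hs0 : 0 < s := Real.sqrt_pos.mpr (by norm_num)
  have ht0 : 0 ≤ t := le_trans hs0.le (le_max_right _ _)
  have ht1 : t < 1 := by
    apply max_lt (max_lt ?_ ?_) ?_
    · exact Real.rpow_lt_one hcω.le hcω1 hip_pos
    · exact Real.rpow_lt_one hcσ.le hcσ1 hip'_pos
    · rw [hs, show (1:ℝ) = Real.sqrt 1 from (Real.sqrt_one).symm]
      exact Real.sqrt_lt_sqrt (by norm_num) (by norm_num)
  have ht2 : (2:ℝ)⁻¹ ≤ t^2 := by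
    have h1 : s^2 = 2⁻¹ := Real.sq_sqrt (by norm_num)
    rw [← h1]
    exact pow_le_pow_left₀ hs0.le (le_max_right _ _) 2
  have htω : ρω ≤ t := le_trans (le_max_left _ _) (le_max_left _ _)
  have htσ : ρσ ≤ t := le_trans (le_max_right _ _) (le_max_left _ _)
  have htE1 : ENNReal.ofReal t < 1 := ENNReal.ofReal_lt_one.mpr ht1
  have hgeom : (1 - ENNReal.ofReal t) ≠ 0 :=
    fun h => absurd (tsub_eq_zero_iff_le.mp h) (not_le.mpr htE1)
  have hgeomtop : (1 - ENNReal.ofReal t) ≠ ∞ :=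
    (lt_of_le_of_lt tsub_le_self ENNReal.one_lt_top).ne
  refine ⟨ENNReal.ofReal ((8:ℝ)^n) * ((1 - ENNReal.ofReal t)⁻¹ * (1 - ENNReal.ofReal t)⁻¹),
    ?_, ?_, ?_⟩
  · have h8 : ENNReal.ofReal ((8:ℝ)^n) ≠ 0 := (ENNReal.ofReal_pos.mpr (by positivity)).ne'
    have hinv0 : (1 - ENNReal.ofReal t)⁻¹ ≠ 0 := ENNReal.inv_ne_zero.mpr hgeomtop
    exact pos_iff_ne_zero.mpr (mul_ne_zero h8 (mul_ne_zero hinv0 hinv0))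
  · have h8 : ENNReal.ofReal ((8:ℝ)^n) ≠ ∞ := ENNReal.ofReal_ne_top
    have hinvtop : (1 - ENNReal.ofReal t)⁻¹ ≠ ∞ := ENNReal.inv_ne_top.mpr hgeom
    exact lt_top_iff_ne_top.mpr (ENNReal.mul_ne_top h8 (ENNReal.mul_ne_top hinvtop hinvtop))
  · intro σ ω _ _ hσ hω
    unfold tailedAp
    refine iSup_le fun a => iSup_le fun l => iSup_le fun hl => ?_
    have hu_bound := st6_factor_bound a hl hp.le ω
    have hv_bound := st6_factor_bound a hl hp'1 σ
    set u : ℕ → ℝ≥0∞ := fun k => ENNReal.ofReal (st6g n k) *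
      ((ω (dilateCube a l ((2:ℝ)^(k+1))) * (ENNReal.ofReal (l^n))⁻¹) ^ (1/p)) with hu
    set v : ℕ → ℝ≥0∞ := fun j => ENNReal.ofReal (st6g n j) *
      ((σ (dilateCube a l ((2:ℝ)^(j+1))) * (ENNReal.ofReal (l^n))⁻¹) ^ (1/p')) with hv
    have hpair : ∀ k j : ℕ, u k * v j ≤
        ENNReal.ofReal ((8:ℝ)^n) * (ENNReal.ofReal t)^(k+j) * scalarAp n p p' σ ω := by
      intro k j
      rcases le_total k j with hkj | hjk
      · exact st6_pair hn hip_pos hip'_pos hpp' hcω hω a hl htω ht2 ht0 hkj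
      · calc u k * v j = v j * u k := mul_comm _ _
          _ ≤ ENNReal.ofReal ((8:ℝ)^n) * (ENNReal.ofReal t)^(j+k) * scalarAp n p' p ω σ :=
            st6_pair hn hip'_pos hip_pos (by linarith) hcσ hσ a hl htσ ht2 ht0 hjk
          _ = ENNReal.ofReal ((8:ℝ)^n) * (ENNReal.ofReal t)^(k+j) * scalarAp n p p' σ ω := by
            rw [Nat.add_comm j k, ← st6_scalarAp_comm]
    have hgsum : ∑' (m:ℕ), (ENNReal.ofReal t)^m = (1 - ENNReal.ofReal t)⁻¹ :=
      ENNReal.tsum_geometric _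
    calc ((ENNReal.ofReal (l^n))⁻¹ *
          ∫⁻ x, ENNReal.ofReal ((l ^ n / (l + Metric.infDist x (cubeSet a l)) ^ n) ^ p) ∂ω) ^ (1/p) *
        ((ENNReal.ofReal (l^n))⁻¹ *
          ∫⁻ x, ENNReal.ofReal ((l ^ n / (l + Metric.infDist x (cubeSet a l)) ^ n) ^ p') ∂σ) ^ (1/p')
        ≤ (∑' k, u k) * (∑' j, v j) := mul_le_mul' hu_bound hv_bound
      _ = ∑' k, (u k * ∑' j, v j) := (ENNReal.tsum_mul_right).symm
      _ = ∑' k, ∑' j, u k * v j := tsum_congr fun k => (ENNReal.tsum_mul_left).symm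
      _ ≤ ∑' k, ∑' j, ENNReal.ofReal ((8:ℝ)^n) * (ENNReal.ofReal t)^(k+j) *
            scalarAp n p p' σ ω := by
          refine ENNReal.tsum_le_tsum fun k => ENNReal.tsum_le_tsum fun j => hpair k j
      _ = ∑' (k:ℕ), (ENNReal.ofReal ((8:ℝ)^n) * scalarAp n p p' σ ω * (1 - ENNReal.ofReal t)⁻¹)
            * (ENNReal.ofReal t)^k := by
          refine tsum_congr fun k => ?_
          calc ∑' (j:ℕ), ENNReal.ofReal ((8:ℝ)^n) * (ENNReal.ofReal t)^(k+j) *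
                scalarAp n p p' σ ω
              = ∑' (j:ℕ), (ENNReal.ofReal ((8:ℝ)^n) * scalarAp n p p' σ ω *
                  (ENNReal.ofReal t)^k) * (ENNReal.ofReal t)^j := by
                refine tsum_congr fun j => ?_
                rw [pow_add]; ring
            _ = (ENNReal.ofReal ((8:ℝ)^n) * scalarAp n p p' σ ω * (ENNReal.ofReal t)^k) *
                  ∑' (j:ℕ), (ENNReal.ofReal t)^j := ENNReal.tsum_mul_left
            _ = _ := by rw [hgsum]; ring
      _ = (ENNReal.ofReal ((8:ℝ)^n) * scalarAp n p p' σ ω * (1 - ENNReal.ofReal t)⁻¹)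
            * ∑' (k:ℕ), (ENNReal.ofReal t)^k := ENNReal.tsum_mul_left
      _ = ENNReal.ofReal ((8:ℝ)^n) * ((1 - ENNReal.ofReal t)⁻¹ * (1 - ENNReal.ofReal t)⁻¹) *
            scalarAp n p p' σ ω := by rw [hgsum]; ring
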